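/- Let m ∈ ℕ, s ∈ {0,1,2}^{k_m−1} and n > m. Then for every gap G ∈ 𝒢^0_s(n), either r(G) ≤ r(G^0(s^0, n)), or l(G^1(s^0, n)) ≤ l(G) < r(G) ≤ r(G^0(s, n)). -/

import Mathlib

open Pointwise MeasureTheory

namespace CCS

/-- `dSeq a n` is the common length `d_n = ∏_{i=1}^n (1 - a_i)/2` of the intervals of the
`n`-th step of the construction of the central Cantor set `C(a)` (`d_0 = 1`).
The sequence `a` is indexed from `1`; the value `a 0` is irrelevant. -/
noncomputable def dSeq (a : ℕ → ℝ) (n : ℕ) : ℝ :=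
  ∏ i ∈ Finset.Icc 1 n, ((1 - a i) / 2)

/-- Left endpoint of the interval `I_t`, `t ∈ {0,1}^n` (coded as a list, the paper's
`t_j` being `t.getD (j-1) 0`): `l(I_t) = ∑_{j=1}^n t_j (d_{j-1} - d_j)`. -/
noncomputable def Il (a : ℕ → ℝ) (t : List ℕ) : ℝ :=
  ∑ j ∈ Finset.range t.length, (t.getD j 0 : ℝ) * (dSeq a j - dSeq a (j + 1))

/-- The `n`-th step `C_n(a)` of the construction of the central Cantor set:
the union of the intervals `I_t = [l(I_t), l(I_t) + d_n]` over `t ∈ {0,1}^n`. -/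
noncomputable def cantorStep (a : ℕ → ℝ) (n : ℕ) : Set ℝ :=
  ⋃ t ∈ {t : List ℕ | t.length = n ∧ ∀ j ∈ t, j ≤ 1},
    Set.Icc (Il a t) (Il a t + dSeq a n)

/-- The central Cantor set `C(a) = ⋂ₙ C_n(a)`. -/
noncomputable def cantorSet (a : ℕ → ℝ) : Set ℝ := ⋂ n, cantorStep a n

/-- Left endpoint of the interval `J_s = I_t - I_p`, for `s ∈ {0,1,2}^n`:
`l(J_s) = -1 + ∑_{j=1}^n s_j (d_{j-1} - d_j)`. -/
noncomputable def Jl (a : ℕ → ℝ) (s : List ℕ) : ℝ :=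
  -1 + ∑ j ∈ Finset.range s.length, (s.getD j 0 : ℝ) * (dSeq a j - dSeq a (j + 1))

/-- Right endpoint of `J_s`: `r(J_s) = l(J_s) + 2 d_n`. -/
noncomputable def Jr (a : ℕ → ℝ) (s : List ℕ) : ℝ :=
  Jl a s + 2 * dSeq a s.length

/-- The interval `J_s`. -/
noncomputable def Jset (a : ℕ → ℝ) (s : List ℕ) : Set ℝ := Set.Icc (Jl a s) (Jr a s)

/-- Left endpoint of the gap `G^i_s` (`i = 0`: left gap, `i = 1`: right gap) of `J_s`. -/
noncomputable def Gl (a : ℕ → ℝ) (i : ℕ) (s : List ℕ) : ℝ :=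
  Jl a s + (i : ℝ) * (dSeq a s.length - dSeq a (s.length + 1)) + 2 * dSeq a (s.length + 1)

/-- Right endpoint of the gap `G^i_s`. -/
noncomputable def Gr (a : ℕ → ℝ) (i : ℕ) (s : List ℕ) : ℝ :=
  Jl a s + ((i : ℝ) + 1) * (dSeq a s.length - dSeq a (s.length + 1))

/-- The gap `G^i_s ⊆ J_s`, an open interval. -/
noncomputable def Gset (a : ℕ → ℝ) (i : ℕ) (s : List ℕ) : Set ℝ :=
  Set.Ioo (Gl a i s) (Gr a i s)

/-- `N(0,s) = max {j : s_j > 0}`, `N(1,s) = max {j : s_j < 2}` (1-based, `max ∅ = 0`). -/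
noncomputable def Nidx (i : ℕ) (s : List ℕ) : ℕ :=
  sSup {j | 1 ≤ j ∧ j ≤ s.length ∧
    (if i = 0 then 0 < s.getD (j - 1) 0 else s.getD (j - 1) 0 < 2)}

/-- The family `𝒢^{i0}_{s0}(n)` of (indices of) gaps of rank `n`, for
`s0 ∈ {0,1,2}^{k_m - 1}`; a gap `G^i_s` is coded by the pair `(i, s)`.
`𝒢^{i0}_{s0}(m) = {G^{i0}_{s0}}` and for `n > m`,
`𝒢^{i0}_{s0}(n)` consists of the gap `Ḡ^{i0}_{s0}(n)` together with the gaps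
`Ḡ^1_{t^j}(n)`, `Ḡ^0_{t^(j+1)}(n)` for all `G^j_t ∈ 𝒢^{i0}_{s0}(l)`, `m ≤ l < n`. -/
def gapFamily (k : ℕ → ℕ) (i0 : ℕ) (s0 : List ℕ) (m : ℕ) (n : ℕ) : Set (ℕ × List ℕ) :=
  if n ≤ m then {(i0, s0)}
  else
    {(i0, s0 ++ List.replicate (k n - k m) (2 * i0))} ∪
      ⋃ (l : ℕ) (_ : m ≤ l) (hl : l < n),
        ⋃ p ∈ gapFamily k i0 s0 m l,
          ({(1, p.2 ++ p.1 :: List.replicate (k n - k l - 1) 2),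
            (0, p.2 ++ (p.1 + 1) :: List.replicate (k n - k l - 1) 0)} : Set (ℕ × List ℕ))
termination_by n
decreasing_by exact hl

/-- The family `𝒢^{i0}_{s0} = ⋃_{n ≥ m} 𝒢^{i0}_{s0}(n)`. -/
def gapFamilyAll (k : ℕ → ℕ) (i0 : ℕ) (s0 : List ℕ) (m : ℕ) : Set (ℕ × List ℕ) :=
  ⋃ (n : ℕ) (_ : m ≤ n), gapFamily k i0 s0 m n

/-- The family `𝒢_t := 𝒢^0_{t ++ 0^{(k_m - |t| - 1)}} ∪ 𝒢^1_{t ++ 2^{(k_m - |t| - 1)}}`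
for `t ∈ {0,1,2}^k` with `k_{m-1} ≤ k < k_m`. -/
def gapFamilyT (k : ℕ → ℕ) (m : ℕ) (t : List ℕ) : Set (ℕ × List ℕ) :=
  gapFamilyAll k 0 (t ++ List.replicate (k m - t.length - 1) 0) m ∪
    gapFamilyAll k 1 (t ++ List.replicate (k m - t.length - 1) 2) m

/-- The union `⋃ 𝒢` of a family of (indices of) gaps, as a subset of `ℝ`. -/
noncomputable def gapUnion (a : ℕ → ℝ) (G : Set (ℕ × List ℕ)) : Set ℝ :=
  ⋃ p ∈ G, Gset a p.1 p.2

/-- `padSeq k c s m n` is the index of the gap `G^i(s,n)` (for `c = 2i`):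
`s ++ c^{(k_m - |s| - 1)} ++ 1 ++ c^{(k_{m+1} - k_m - 1)} ++ 1 ++ ⋯ ++ 1 ++ c^{(k_n - k_{n-1} - 1)}`. -/
def padSeq (k : ℕ → ℕ) (c : ℕ) (s : List ℕ) (m : ℕ) : ℕ → List ℕ
  | 0 => s ++ List.replicate (k m - s.length - 1) c
  | n + 1 =>
    if n + 1 ≤ m then s ++ List.replicate (k m - s.length - 1) c
    else padSeq k c s m n ++ 1 :: List.replicate (k (n + 1) - k n - 1) c

/-- `δ_n := min {3d_i - d_{i-1} : k_{n-1} + 1 ≤ i ≤ k_n - 1}` (as an element of `EReal`,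
so that `min ∅ = ⊤ = ∞`). -/
noncomputable def deltaMin (a : ℕ → ℝ) (k : ℕ → ℕ) (n : ℕ) : EReal :=
  sInf ((fun i => ((3 * dSeq a i - dSeq a (i - 1) : ℝ) : EReal)) ''
    (Set.Icc (k (n - 1) + 1) (k n - 1)))

/-- `Δ_n := max {3d_i - d_{i-1} : k_{n-1} + 1 ≤ i ≤ k_n - 1}` (`max ∅ = ⊥ = -∞`). -/
noncomputable def deltaMax (a : ℕ → ℝ) (k : ℕ → ℕ) (n : ℕ) : EReal :=
  sSup ((fun i => ((3 * dSeq a i - dSeq a (i - 1) : ℝ) : EReal)) ''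
    (Set.Icc (k (n - 1) + 1) (k n - 1)))

/-- `m_n := min { δ_n - (d_{k_n - 1} - d_{k_n}), 4 d_{k_n} - Δ_n }`. -/
noncomputable def mSeq (a : ℕ → ℝ) (k : ℕ → ℕ) (n : ℕ) : EReal :=
  min (deltaMin a k n - ((dSeq a (k n - 1) - dSeq a (k n) : ℝ) : EReal))
    (((4 * dSeq a (k n) : ℝ) : EReal) - deltaMax a k n)

/-- `∑_{i=n+1}^∞ (d_{k_i - 1} - d_{k_i})`. -/
noncomputable def tailSum (a : ℕ → ℝ) (k : ℕ → ℕ) (n : ℕ) : ℝ :=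
  ∑' i : ℕ, (dSeq a (k (n + 1 + i) - 1) - dSeq a (k (n + 1 + i)))

/-- Condition `(*)`: `m_n ≥ 2 ∑_{i=n+1}^∞ (d_{k_i - 1} - d_{k_i})` for every `n ∈ ℕ`. -/
def condStar (a : ℕ → ℝ) (k : ℕ → ℕ) : Prop :=
  ∀ n : ℕ, 1 ≤ n → ((2 * tailSum a k n : ℝ) : EReal) ≤ mSeq a k n

/-- `(k_n)_{n ≥ 1}` is the increasing enumeration of all indices greater than `k 0 = k₀`
at which `a` exceeds `1/3`. -/
def IsGapEnum (a : ℕ → ℝ) (k : ℕ → ℕ) : Prop :=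
  StrictMono k ∧ (∀ n, 1 ≤ n → k 0 < k n ∧ 1 / 3 < a (k n)) ∧
    (∀ j, k 0 < j → 1 / 3 < a j → ∃ n, 1 ≤ n ∧ k n = j)

/-- `G` is a gap of `E`: a bounded connected component of `ℝ ∖ E`. -/
def IsGapOf (E G : Set ℝ) : Prop :=
  (∃ x ∉ E, G = connectedComponentIn Eᶜ x) ∧ Bornology.IsBounded G

/-- `C` is a proper (nontrivial) connected component of `E`. -/
def IsProperComponentOf (E C : Set ℝ) : Prop :=
  (∃ x ∈ E, C = connectedComponentIn E x) ∧ C.Nontrivial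

/-- `E` is a Cantorval: a perfect set with infinitely many gaps such that both endpoints
of every gap are accumulated both by gaps and by proper components of `E`. -/
def IsCantorval (E : Set ℝ) : Prop :=
  Perfect E ∧ {G : Set ℝ | IsGapOf E G}.Infinite ∧
    ∀ G, IsGapOf E G → ∀ p, p = sInf G ∨ p = sSup G →
      (∀ ε > 0, ∃ G', IsGapOf E G' ∧ G' ≠ G ∧ G' ⊆ Set.Ioo (p - ε) (p + ε)) ∧
      (∀ ε > 0, ∃ C, IsProperComponentOf E C ∧ C ⊆ Set.Ioo (p - ε) (p + ε))

/-- `J_s` and `J_u` (of length `k_m - 1`) are associated: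
`N := N(0,s) = N(1,u) ∈ {k_{m-1}+1, …, k_m - 1}`, `s|(N-1) = u|(N-1)`, `u_N = s_N - 1`.
Then `J_u` is the interval covering `𝒢^0_s` and `J_s` is the interval covering `𝒢^1_u`. -/
def Associated (k : ℕ → ℕ) (m : ℕ) (s u : List ℕ) : Prop :=
  s.length = k m - 1 ∧ u.length = k m - 1 ∧
    Nidx 0 s = Nidx 1 u ∧
    k (m - 1) + 1 ≤ Nidx 0 s ∧ Nidx 0 s ≤ k m - 1 ∧
    s.take (Nidx 0 s - 1) = u.take (Nidx 0 s - 1) ∧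
    u.getD (Nidx 0 s - 1) 0 = s.getD (Nidx 0 s - 1) 0 - 1

/-- `G^i_g ⊂_* J_v`: the gap `G^i_g` is covered by the interval `J_v`, i.e. `G^i_g`
belongs to a family `𝒢^0_w` (resp. `𝒢^1_w`) such that `J_v` is the interval covering it. -/
def CoversGap (k : ℕ → ℕ) (i : ℕ) (g : List ℕ) (v : List ℕ) : Prop :=
  ∃ m w, 1 ≤ m ∧
    ((Associated k m w v ∧ (i, g) ∈ gapFamilyAll k 0 w m) ∨
      (Associated k m v w ∧ (i, g) ∈ gapFamilyAll k 1 w m))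

/-- The achievement set `E(x) = {∑_{j ∈ A} x_j : A ⊆ ℕ}` of a series (indexed from `1`). -/
def achievementSet (x : ℕ → ℝ) : Set ℝ :=
  {y | ∃ A : Set ℕ, A ⊆ {n | 1 ≤ n} ∧ HasSum (A.indicator x) y}

lemma dSeq_pos (a : ℕ → ℝ) (ha : ∀ n, 1 ≤ n → 0 < a n ∧ a n < 1) (n : ℕ) :
    0 < dSeq a n := by
  refine Finset.prod_pos fun i hi => ?_
  have := (ha i (Finset.mem_Icc.mp hi).1).2
  linarith

lemma dSeq_succ (a : ℕ → ℝ) (n : ℕ) :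
    dSeq a (n + 1) = dSeq a n * ((1 - a (n + 1)) / 2) := by
  rw [dSeq, dSeq, Finset.prod_Icc_succ_top (Nat.le_add_left 1 n)]

lemma dSeq_two_lt (a : ℕ → ℝ) (ha : ∀ n, 1 ≤ n → 0 < a n ∧ a n < 1) (n : ℕ) :
    2 * dSeq a (n + 1) < dSeq a n := by
  have h0 := (ha (n + 1) (Nat.le_add_left 1 n)).1
  have h1 := (ha (n + 1) (Nat.le_add_left 1 n)).2
  have hd := dSeq_pos a ha n
  rw [dSeq_succ]
  nlinarith

lemma dSeq_anti (a : ℕ → ℝ) (ha : ∀ n, 1 ≤ n → 0 < a n ∧ a n < 1) {i j : ℕ}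
    (h : i ≤ j) : dSeq a j ≤ dSeq a i := by
  induction j with
  | zero => simpa [Nat.le_zero.mp h]
  | succ j ih =>
    rcases Nat.lt_or_ge i (j + 1) with h' | h'
    · have := dSeq_two_lt a ha j
      have := dSeq_pos a ha (j + 1)
      have := ih (Nat.lt_succ_iff.mp h')
      linarith
    · have : i = j + 1 := le_antisymm h h'
      simp [this]

lemma dSeq_three (a : ℕ → ℝ) (ha : ∀ n, 1 ≤ n → 0 < a n ∧ a n < 1) {K : ℕ}
    (hK : 1 ≤ K) (haK : 1 / 3 < a K) : 3 * dSeq a K < dSeq a (K - 1) := by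
  have h : K - 1 + 1 = K := Nat.succ_pred_eq_of_pos hK
  have hd := dSeq_pos a ha (K - 1)
  have h1 := (ha K hK).2
  calc 3 * dSeq a K = 3 * dSeq a (K - 1 + 1) := by rw [h]
    _ = 3 * (dSeq a (K - 1) * ((1 - a (K - 1 + 1)) / 2)) := by rw [dSeq_succ]
    _ < dSeq a (K - 1) := by rw [h]; nlinarith

lemma Jl_concat (a : ℕ → ℝ) (s : List ℕ) (c : ℕ) :
    Jl a (s ++ [c]) = Jl a s + (c : ℝ) * (dSeq a s.length - dSeq a (s.length + 1)) := by
  unfold Jl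
  rw [List.length_append, List.length_singleton, Finset.sum_range_succ]
  have h1 : ∀ j ∈ Finset.range s.length,
      ((s ++ [c]).getD j 0 : ℝ) * (dSeq a j - dSeq a (j + 1)) =
      (s.getD j 0 : ℝ) * (dSeq a j - dSeq a (j + 1)) := by
    intro j hj
    rw [List.getD_append _ _ _ _ (Finset.mem_range.mp hj)]
  rw [Finset.sum_congr rfl h1]
  have h2 : (s ++ [c]).getD s.length 0 = c := by
    rw [List.getD_append_right _ _ _ _ le_rfl]
    simp [List.getD]
  rw [h2]
  ring

lemma Jl_replicate (a : ℕ → ℝ) (s : List ℕ) (c r : ℕ) :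
    Jl a (s ++ List.replicate r c) =
      Jl a s + (c : ℝ) * (dSeq a s.length - dSeq a (s.length + r)) := by
  induction r with
  | zero => simp
  | succ r ih =>
    rw [List.replicate_succ', ← List.append_assoc, Jl_concat, ih,
      List.length_append, List.length_replicate]
    ring_nf

lemma Jl_mid (a : ℕ → ℝ) (t : List ℕ) (j c r : ℕ) :
    Jl a (t ++ j :: List.replicate r c) =
      Jl a t + (j : ℝ) * (dSeq a t.length - dSeq a (t.length + 1)) +
        (c : ℝ) * (dSeq a (t.length + 1) - dSeq a (t.length + 1 + r)) := by
  rw [show t ++ j :: List.replicate r c = (t ++ [j]) ++ List.replicate r c by simp,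
    Jl_replicate, Jl_concat, List.length_append, List.length_singleton]


section Aux


variable (a : ℕ → ℝ) (k : ℕ → ℕ)


noncomputable def Tsum (m n : ℕ) : ℝ :=
  ∑ q ∈ Finset.Ioc m n, (dSeq a (k q - 1) - dSeq a (k q))

lemma Tsum_self (m : ℕ) : Tsum a k m m = 0 := by simp [Tsum]

lemma Tsum_term_nonneg (ha : ∀ n, 1 ≤ n → 0 < a n ∧ a n < 1) (q : ℕ) :
    0 ≤ dSeq a (k q - 1) - dSeq a (k q) :=
  sub_nonneg.mpr (dSeq_anti a ha (Nat.sub_le (k q) 1))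

lemma Tsum_nonneg (ha : ∀ n, 1 ≤ n → 0 < a n ∧ a n < 1) (m n : ℕ) :
    0 ≤ Tsum a k m n :=
  Finset.sum_nonneg fun q _ => Tsum_term_nonneg a k ha q

lemma Tsum_single (ha : ∀ n, 1 ≤ n → 0 < a n ∧ a n < 1) {m n : ℕ} (hmn : m < n) :
    dSeq a (k n - 1) - dSeq a (k n) ≤ Tsum a k m n :=
  Finset.single_le_sum (fun q _ => Tsum_term_nonneg a k ha q)
    (Finset.mem_Ioc.mpr ⟨hmn, le_rfl⟩)

lemma Tsum_mono (ha : ∀ n, 1 ≤ n → 0 < a n ∧ a n < 1) {m l n : ℕ}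
    (hml : m ≤ l) (hln : l < n) :
    Tsum a k m l + (dSeq a (k n - 1) - dSeq a (k n)) ≤ Tsum a k m n := by
  have h : Tsum a k m n = Tsum a k m l + Tsum a k l n :=
    (Finset.sum_Ioc_consecutive _ hml hln.le).symm
  rw [h]
  exact add_le_add_right (Tsum_single a k ha hln) _

lemma Tsum_succ {m n : ℕ} (hmn : m ≤ n) :
    Tsum a k m (n + 1) = Tsum a k m n + (dSeq a (k (n + 1) - 1) - dSeq a (k (n + 1))) := by
  rw [Tsum, Finset.sum_Ioc_succ_top hmn, Tsum]

lemma padSeq_base (c : ℕ) (s0 : List ℕ) (m0 : ℕ) :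
    padSeq k c s0 m0 m0 = s0 ++ List.replicate (k m0 - s0.length - 1) c := by
  cases m0 with
  | zero => rfl
  | succ m => rw [padSeq, if_pos le_rfl]

lemma padSeq_succ (c : ℕ) (s0 : List ℕ) {m0 n : ℕ} (hn : m0 ≤ n) :
    padSeq k c s0 m0 (n + 1) =
      padSeq k c s0 m0 n ++ 1 :: List.replicate (k (n + 1) - k n - 1) c := by
  rw [padSeq, if_neg (by omega)]

lemma padSeq_length (hk : StrictMono k) (c : ℕ) (s0 : List ℕ) {m0 : ℕ}
    (h1 : 1 ≤ k m0) (h : s0.length ≤ k m0 - 1) :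
    ∀ n, m0 ≤ n → (padSeq k c s0 m0 n).length = k n - 1 := by
  intro n hn
  induction n, hn using Nat.le_induction with
  | base =>
    rw [padSeq_base, List.length_append, List.length_replicate]
    omega
  | succ n hn ih =>
    rw [padSeq_succ k c s0 hn, List.length_append, List.length_cons,
      List.length_replicate, ih]
    have h2 : k n < k (n + 1) := hk (Nat.lt_succ_self n)
    have h3 : k m0 ≤ k n := hk.le_iff_le.mpr hn
    omega

lemma Gr_len (i : ℕ) (q : List ℕ) (K : ℕ) (hq : q.length = K - 1) (hK : 1 ≤ K) :
    Gr a i q = Jl a q + ((i : ℝ) + 1) * (dSeq a (K - 1) - dSeq a K) := by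
  rw [Gr, hq, Nat.sub_add_cancel hK]

lemma Gl_len (i : ℕ) (q : List ℕ) (K : ℕ) (hq : q.length = K - 1) (hK : 1 ≤ K) :
    Gl a i q = Jl a q + (i : ℝ) * (dSeq a (K - 1) - dSeq a K) + 2 * dSeq a K := by
  rw [Gl, hq, Nat.sub_add_cancel hK]

end Aux
section Pads

variable (a : ℕ → ℝ) (k : ℕ → ℕ)

lemma Jl_pad_base (c : ℕ) (s0 : List ℕ) (m0 : ℕ) (h1 : 1 ≤ k m0)
    (hl : s0.length ≤ k m0 - 1) :
    Jl a (padSeq k c s0 m0 m0) =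
      Jl a s0 + (c : ℝ) * (dSeq a s0.length - dSeq a (k m0 - 1)) := by
  rw [padSeq_base, Jl_replicate,
    show s0.length + (k m0 - s0.length - 1) = k m0 - 1 by omega]

lemma Jl_pad_step (hkmono : StrictMono k) (c : ℕ) (s0 : List ℕ) {m0 n : ℕ}
    (h1 : 1 ≤ k m0) (hl : s0.length ≤ k m0 - 1) (hn : m0 ≤ n) :
    Jl a (padSeq k c s0 m0 (n + 1)) =
      Jl a (padSeq k c s0 m0 n) + (dSeq a (k n - 1) - dSeq a (k n)) +
        (c : ℝ) * (dSeq a (k n) - dSeq a (k (n + 1) - 1)) := by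
  rw [padSeq_succ k c s0 hn, Jl_mid, padSeq_length k hkmono c s0 h1 hl n hn]
  have hkn1 : 1 ≤ k n := le_trans h1 (hkmono.le_iff_le.mpr hn)
  have hkk : k n < k (n + 1) := hkmono n.lt_succ_self
  rw [Nat.sub_add_cancel hkn1,
    show k n + (k (n + 1) - k n - 1) = k (n + 1) - 1 by omega]
  push_cast
  ring

variable {m : ℕ} {s : List ℕ}
variable (hkmono : StrictMono k) (hk1 : ∀ q, 1 ≤ q → 1 ≤ k q)
  (hm : 1 ≤ m) (hslen : s.length = k m - 1)

include hkmono hk1 hm hslen in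
lemma padA : ∀ n, m < n →
    Gr a 0 (padSeq k 0 (s ++ [0]) (m + 1) n) = Jl a s + Tsum a k m n := by
  have hkm : 1 ≤ k m := hk1 m hm
  have hkms : k m < k (m + 1) := hkmono m.lt_succ_self
  have h1 : 1 ≤ k (m + 1) := by omega
  have hsl0 : (s ++ [0]).length = k m := by
    rw [List.length_append, hslen]; simp; omega
  have hle : (s ++ [0]).length ≤ k (m + 1) - 1 := by omega
  intro n hn
  induction n, hn using Nat.le_induction with
  | base =>
    rw [Gr_len a 0 _ (k (m + 1))
        (padSeq_length k hkmono 0 _ h1 hle (m + 1) le_rfl) h1,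
      Jl_pad_base a k 0 _ (m + 1) h1 hle, Jl_concat,
      Tsum_succ a k le_rfl, Tsum_self]
    push_cast
    ring
  | succ n hn ih =>
    have hkn1 : 1 ≤ k n := le_trans h1 (hkmono.le_iff_le.mpr hn)
    have hkk : k n < k (n + 1) := hkmono n.lt_succ_self
    have hlen : (padSeq k 0 (s ++ [0]) (m + 1) n).length = k n - 1 :=
      padSeq_length k hkmono 0 _ h1 hle n hn
    have hGr := Gr_len a 0 (padSeq k 0 (s ++ [0]) (m + 1) n) (k n) hlen hkn1
    rw [Gr_len a 0 _ (k (n + 1))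
        (padSeq_length k hkmono 0 _ h1 hle (n + 1) (by omega)) (by omega),
      Jl_pad_step a k hkmono 0 _ h1 hle hn, Tsum_succ a k (by omega)]
    have hJ := hGr.symm.trans ih
    push_cast at hJ ⊢
    linarith

include hkmono hk1 hm hslen in
lemma padB : ∀ n, m < n →
    Gl a 1 (padSeq k 2 (s ++ [0]) (m + 1) n) =
      Jl a s + 2 * dSeq a (k m) - Tsum a k m n := by
  have hkm : 1 ≤ k m := hk1 m hm
  have hkms : k m < k (m + 1) := hkmono m.lt_succ_self
  have h1 : 1 ≤ k (m + 1) := by omega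
  have hsl0 : (s ++ [0]).length = k m := by
    rw [List.length_append, hslen]; simp; omega
  have hle : (s ++ [0]).length ≤ k (m + 1) - 1 := by omega
  intro n hn
  induction n, hn using Nat.le_induction with
  | base =>
    rw [Gl_len a 1 _ (k (m + 1))
        (padSeq_length k hkmono 2 _ h1 hle (m + 1) le_rfl) h1,
      Jl_pad_base a k 2 _ (m + 1) h1 hle, Jl_concat, hsl0,
      Tsum_succ a k le_rfl, Tsum_self]
    push_cast
    ring
  | succ n hn ih =>
    have hkn1 : 1 ≤ k n := le_trans h1 (hkmono.le_iff_le.mpr hn)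
    have hkk : k n < k (n + 1) := hkmono n.lt_succ_self
    have hlen : (padSeq k 2 (s ++ [0]) (m + 1) n).length = k n - 1 :=
      padSeq_length k hkmono 2 _ h1 hle n hn
    have hGl := Gl_len a 1 (padSeq k 2 (s ++ [0]) (m + 1) n) (k n) hlen hkn1
    rw [Gl_len a 1 _ (k (n + 1))
        (padSeq_length k hkmono 2 _ h1 hle (n + 1) (by omega)) (by omega),
      Jl_pad_step a k hkmono 2 _ h1 hle hn, Tsum_succ a k (by omega)]
    have hJ := hGl.symm.trans ih
    push_cast at hJ ⊢
    linarith

include hkmono hk1 hm hslen in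
lemma padC : ∀ n, m < n →
    Gr a 0 (padSeq k 0 s m n) =
      Jl a s + (dSeq a (k m - 1) - dSeq a (k m)) + Tsum a k m n := by
  have hkm : 1 ≤ k m := hk1 m hm
  have hle : s.length ≤ k m - 1 := le_of_eq hslen
  intro n hn
  induction n, hn using Nat.le_induction with
  | base =>
    have hkms : k m < k (m + 1) := hkmono m.lt_succ_self
    rw [Gr_len a 0 _ (k (m + 1))
        (padSeq_length k hkmono 0 _ hkm hle (m + 1) (by omega)) (by omega),
      Jl_pad_step a k hkmono 0 _ hkm hle le_rfl,
      Jl_pad_base a k 0 _ m hkm hle, hslen,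
      Tsum_succ a k le_rfl, Tsum_self]
    push_cast
    ring
  | succ n hn ih =>
    have hkn1 : 1 ≤ k n := le_trans hkm (hkmono.le_iff_le.mpr (by omega : m ≤ n))
    have hkk : k n < k (n + 1) := hkmono n.lt_succ_self
    have hlen : (padSeq k 0 s m n).length = k n - 1 :=
      padSeq_length k hkmono 0 _ hkm hle n (by omega)
    have hGr := Gr_len a 0 (padSeq k 0 s m n) (k n) hlen hkn1
    rw [Gr_len a 0 _ (k (n + 1))
        (padSeq_length k hkmono 0 _ hkm hle (n + 1) (by omega)) (by omega),
      Jl_pad_step a k hkmono 0 _ hkm hle (by omega), Tsum_succ a k (by omega)]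
    have hJ := hGr.symm.trans ih
    push_cast at hJ ⊢
    linarith

end Pads




lemma gapFamily_length (k : ℕ → ℕ) (hkmono : StrictMono k) {m : ℕ} {s : List ℕ}
    (hkm1 : 1 ≤ k m) (hslen : s.length = k m - 1) (i0 : ℕ) :
    ∀ n, m ≤ n → ∀ p ∈ gapFamily k i0 s m n, p.2.length = k n - 1 := by
  intro n
  induction n using Nat.strong_induction_on with
  | _ n IH =>
    intro hmn p hp
    rcases Nat.eq_or_lt_of_le hmn with heq | hlt
    · rw [gapFamily, if_pos (le_of_eq heq.symm)] at hp
      rw [Set.mem_singleton_iff] at hp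
      subst hp
      simp only
      rw [hslen, ← heq]
    · rw [gapFamily, if_neg (by omega)] at hp
      simp only [Set.mem_union, Set.mem_singleton_iff, Set.mem_iUnion,
        Set.mem_insert_iff] at hp
      have hkmn : k m ≤ k n := hkmono.le_iff_le.mpr hmn
      rcases hp with rfl | ⟨l, hml, hln, p', hp', hpe⟩
      · simp only [List.length_append, List.length_replicate, hslen]
        omega
      · have hl' : p'.2.length = k l - 1 := IH l hln hml p' hp'
        have hkl1 : 1 ≤ k l := le_trans hkm1 (hkmono.le_iff_le.mpr hml)
        have hkln : k l < k n := hkmono hln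
        rcases hpe with rfl | rfl <;>
          simp only [List.length_append, List.length_cons, List.length_replicate, hl'] <;>
          omega

lemma key_claim (a : ℕ → ℝ) (k : ℕ → ℕ)
    (ha : ∀ n, 1 ≤ n → 0 < a n ∧ a n < 1)
    (hkmono : StrictMono k) (hk1 : ∀ q, 1 ≤ q → 1 ≤ k q)
    (hk3 : ∀ q, 1 ≤ q → 1 / 3 < a (k q))
    {m : ℕ} {s : List ℕ} (hm : 1 ≤ m) (hslen : s.length = k m - 1) :
    ∀ n, m ≤ n → ∀ p ∈ gapFamily k 0 s m n,
      Gr a p.1 p.2 ≤ Jl a s + Tsum a k m n ∨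
        (Jl a s + 2 * dSeq a (k m) - Tsum a k m n ≤ Gl a p.1 p.2 ∧
          Gl a p.1 p.2 < Gr a p.1 p.2 ∧
          Gr a p.1 p.2 ≤ Jl a s + (dSeq a (k m - 1) - dSeq a (k m)) + Tsum a k m n) := by
  have hkm1 : 1 ≤ k m := hk1 m hm
  have h3m : 3 * dSeq a (k m) < dSeq a (k m - 1) := dSeq_three a ha hkm1 (hk3 m hm)
  intro n
  induction n using Nat.strong_induction_on with
  | _ n IH =>
    intro hmn p hp
    rcases Nat.eq_or_lt_of_le hmn with heq | hlt
    · -- n = m : the single gap (0, s), option b with equalities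
      rw [gapFamily, if_pos (le_of_eq heq.symm)] at hp
      rw [Set.mem_singleton_iff] at hp
      subst hp
      right
      rw [Gl_len a 0 s (k m) hslen hkm1, Gr_len a 0 s (k m) hslen hkm1, ← heq,
        Tsum_self]
      push_cast
      refine ⟨by linarith, by linarith, by linarith⟩
    · -- n > m
      have hkn1 : 1 ≤ k n := hk1 n (by omega)
      have hkmn : k m < k n := hkmono hlt
      have h3n : 3 * dSeq a (k n) < dSeq a (k n - 1) :=
        dSeq_three a ha hkn1 (hk3 n (by omega))
      have hdkn : 0 < dSeq a (k n) := dSeq_pos a ha (k n)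
      have hT1 : dSeq a (k n - 1) - dSeq a (k n) ≤ Tsum a k m n :=
        Tsum_single a k ha hlt
      rw [gapFamily, if_neg (by omega)] at hp
      simp only [Set.mem_union, Set.mem_singleton_iff, Set.mem_iUnion,
        Set.mem_insert_iff] at hp
      rcases hp with rfl | ⟨l, hml, hln, p', hp', hpe⟩
      · -- the leftmost gap of rank n
        left
        have hlen : (s ++ List.replicate (k n - k m) (2 * 0)).length = k n - 1 := by
          simp only [List.length_append, List.length_replicate, hslen]; omega
        rw [Gr_len a _ _ (k n) hlen hkn1, Jl_replicate]
        push_cast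
        linarith
      · -- gaps coming from a gap of rank l
        have hlenl : p'.2.length = k l - 1 :=
          gapFamily_length k hkmono hkm1 hslen 0 l hml p' hp'
        have hkl1 : 1 ≤ k l := le_trans hkm1 (hkmono.le_iff_le.mpr hml)
        have hkln : k l < k n := hkmono hln
        have h3l : 3 * dSeq a (k l) < dSeq a (k l - 1) :=
          dSeq_three a ha hkl1 (hk3 l (by omega))
        have hdkl : 0 < dSeq a (k l) := dSeq_pos a ha (k l)
        have hTl : Tsum a k m l + (dSeq a (k n - 1) - dSeq a (k n)) ≤ Tsum a k m n :=
          Tsum_mono a k ha hml hln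
        have hIH := IH l hln hml p' hp'
        rw [Gl_len a p'.1 p'.2 (k l) hlenl hkl1,
          Gr_len a p'.1 p'.2 (k l) hlenl hkl1] at hIH
        rcases hpe with rfl | rfl
        · -- p = (1, p'.2 ++ p'.1 :: replicate 2)
          have hlen : (p'.2 ++ p'.1 :: List.replicate (k n - k l - 1) 2).length
              = k n - 1 := by
            simp only [List.length_append, List.length_cons,
              List.length_replicate, hlenl]; omega
          rw [Gl_len a _ _ (k n) hlen hkn1, Gr_len a _ _ (k n) hlen hkn1, Jl_mid,
            hlenl, Nat.sub_add_cancel hkl1,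
            show k l + (k n - k l - 1) = k n - 1 by omega]
          rcases hIH with hA' | ⟨hb1, hb2, hb3⟩
          · left; push_cast at hA' ⊢; linarith
          · right
            push_cast at hb1 hb2 hb3 ⊢
            refine ⟨by linarith, by linarith, by linarith⟩
        · -- p = (0, p'.2 ++ (p'.1 + 1) :: replicate 0)
          have hlen : (p'.2 ++ (p'.1 + 1) :: List.replicate (k n - k l - 1) 0).length
              = k n - 1 := by
            simp only [List.length_append, List.length_cons,
              List.length_replicate, hlenl]; omega
          rw [Gl_len a _ _ (k n) hlen hkn1, Gr_len a _ _ (k n) hlen hkn1, Jl_mid,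
            hlenl, Nat.sub_add_cancel hkl1,
            show k l + (k n - k l - 1) = k n - 1 by omega]
          rcases hIH with hA' | ⟨hb1, hb2, hb3⟩
          · left; push_cast at hA' ⊢; linarith
          · right
            push_cast at hb1 hb2 hb3 ⊢
            refine ⟨by linarith, by linarith, by linarith⟩

/-- Lemma: for `s ∈ {0,1,2}^{k_m - 1}`, `n > m` and every gap `G = G^{p.1}_{p.2} ∈ 𝒢⁰_s(n)`:
either `r(G) ≤ r(G⁰(s⌢0, n))`, or `l(G¹(s⌢0, n)) ≤ l(G) < r(G) ≤ r(G⁰(s, n))`. -/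
theorem gap_location_left_family (a : ℕ → ℝ) (k : ℕ → ℕ)
    (ha : ∀ n, 1 ≤ n → 0 < a n ∧ a n < 1)
    (hinf : {n : ℕ | 1 ≤ n ∧ 1 / 3 < a n}.Infinite)
    (hk0 : a (k 0 + 1) < 1 / 3)
    (hk : IsGapEnum a k)
    (m : ℕ) (hm : 1 ≤ m)
    (s : List ℕ) (hs2 : ∀ x ∈ s, x ≤ 2) (hslen : s.length = k m - 1)
    (n : ℕ) (hn : m < n) :
    ∀ p ∈ gapFamily k 0 s m n,
      Gr a p.1 p.2 ≤ Gr a 0 (padSeq k 0 (s ++ [0]) (m + 1) n) ∨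
        (Gl a 1 (padSeq k 2 (s ++ [0]) (m + 1) n) ≤ Gl a p.1 p.2 ∧
          Gl a p.1 p.2 < Gr a p.1 p.2 ∧
          Gr a p.1 p.2 ≤ Gr a 0 (padSeq k 0 s m n)) := by
  have hkmono : StrictMono k := hk.1
  have hk1 : ∀ q, 1 ≤ q → 1 ≤ k q := fun q hq => by
    have := (hk.2.1 q hq).1; omega
  have hk3 : ∀ q, 1 ≤ q → 1 / 3 < a (k q) := fun q hq => (hk.2.1 q hq).2
  intro p hp
  rw [padA a k hkmono hk1 hm hslen n hn, padB a k hkmono hk1 hm hslen n hn,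
    padC a k hkmono hk1 hm hslen n hn]
  exact key_claim a k ha hkmono hk1 hk3 hm hslen n (le_of_lt hn) p hp
end CCS
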